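/- Let p, q, θ ∈ ℝ, s := cos(θ)·1 + sin(θ)·kℓ, and let B be the 3×3 octonionic Hermitian matrix with rows (p, q·i, q·(k·s)), (−q·i, p, q·j), (−q·(k·s), −q·j, p). For (ε, S) equal to (+1, −kℓ) or (−1, 1), the following right-eigenvalue relations hold, where a vector is multiplied by S componentwise on the right: B·((i, 0, j)·S) = ((i, 0, j)·S)·(p + ε·q·conj(s)); B·((j, 2·k·s, i)·S) = ((j, 2·k·s, i)·S)·(p + ε·q·conj(s)); and B·((j, −k·s, i)·S) = ((j, −k·s, i)·S)·(p − 2·ε·q·conj(s)). -/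

import Mathlib

noncomputable section

open Quaternion

/-- The octonions, realized as the Cayley–Dickson double of the real quaternions:
pairs of quaternions. -/
abbrev 𝕆 : Type := ℍ[ℝ] × ℍ[ℝ]

namespace Octonion

/-- Cayley–Dickson multiplication: `(a, b)·(c, d) = (a·c − conj(d)·b, d·a + b·conj(c))`. -/
def omul (x y : 𝕆) : 𝕆 :=
  (x.1 * y.1 - star y.2 * x.2, y.2 * x.1 + x.2 * star y.1)

/-- Octonionic conjugation: `conj (a, b) = (conj a, −b)`. -/
def oconj (x : 𝕆) : 𝕆 := (star x.1, -x.2)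

/-- The embedding of the reals, `r ↦ (r, 0)`. -/
def oR (r : ℝ) : 𝕆 := ((r : ℍ[ℝ]), 0)

/-- The unit octonion `1 = (1, 0)`. -/
def o1 : 𝕆 := oR 1

/-- The associator `[a,b,c] = (a·b)·c − a·(b·c)`. -/
def oassoc (a b c : 𝕆) : 𝕆 := omul (omul a b) c - omul a (omul b c)

/-- The inner product: the real number with `(a·conj b + b·conj a)/2 = (a ⋅ b)·1`. -/
def odot (x y : 𝕆) : ℝ := (omul x (oconj y) + omul y (oconj x)).1.re / 2

/-- The squared norm `|x|²`, the real number with `x·conj x = |x|²·1`. -/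
def onormSq (x : 𝕆) : ℝ := odot x x

/-- The real part of an octonion, as a real number. -/
def oreR (x : 𝕆) : ℝ := x.1.re

/-- The imaginary part `Im(x) = (x − conj x)/2`. -/
def oIm (x : 𝕆) : 𝕆 := (2:ℝ)⁻¹ • (x - oconj x)

/-- The imaginary units. -/
def oi : 𝕆 := (⟨0,1,0,0⟩, 0)
def oj : 𝕆 := (⟨0,0,1,0⟩, 0)
def ok : 𝕆 := (⟨0,0,0,1⟩, 0)
def ol : 𝕆 := (0, 1)
def oil : 𝕆 := (0, ⟨0,1,0,0⟩)
def ojl : 𝕆 := (0, ⟨0,0,1,0⟩)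
def okl : 𝕆 := (0, ⟨0,0,0,1⟩)

end Octonion


open Octonion

/-- The action of a `3×3` octonionic matrix on a column vector:
`(B·v)ₐ = ∑ᵦ Bₐᵦ·vᵦ`. -/
def mvec (B : Fin 3 → Fin 3 → 𝕆) (u : Fin 3 → 𝕆) : Fin 3 → 𝕆 :=
  fun α => ∑ β, omul (B α β) (u β)

/-- `s = cos θ + sin θ kℓ`. -/
def sB (θ : ℝ) : 𝕆 := Real.cos θ • o1 + Real.sin θ • okl

/-- The matrix `B` of Example 1, with rows `(p, qi, q(ks))`, `(−qi, p, qj)`,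
`(−q(ks), −qj, p)`. -/
def Bmat (p q θ : ℝ) : Fin 3 → Fin 3 → 𝕆 :=
  ![![oR p, q • oi, q • omul ok (sB θ)],
    ![-(q • oi), oR p, q • oj],
    ![-(q • omul ok (sB θ)), -(q • oj), oR p]]

set_option maxHeartbeats 12000000 in
/-- The non-real right eigenvectors of Example 1:
for `(ε, S) = (+1, −kℓ)` or `(−1, 1)`,
`B·((i,0,j)·S) = ((i,0,j)·S)·(p + εq conj s)`,
`B·((j,2ks,i)·S) = ((j,2ks,i)·S)·(p + εq conj s)`, and
`B·((j,−ks,i)·S) = ((j,−ks,i)·S)·(p − 2εq conj s)`. -/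
theorem example1_eigenvectors (p q θ ε : ℝ) (S : 𝕆)
    (hεS : (ε = 1 ∧ S = -okl) ∨ (ε = -1 ∧ S = o1)) :
    mvec (Bmat p q θ) ![omul oi S, omul 0 S, omul oj S]
        = (fun α => omul (![omul oi S, omul 0 S, omul oj S] α)
            (oR p + (ε * q) • oconj (sB θ)))
    ∧ mvec (Bmat p q θ) ![omul oj S, omul ((2:ℝ) • omul ok (sB θ)) S, omul oi S]
        = (fun α => omul (![omul oj S, omul ((2:ℝ) • omul ok (sB θ)) S, omul oi S] α)
            (oR p + (ε * q) • oconj (sB θ)))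
    ∧ mvec (Bmat p q θ) ![omul oj S, omul (-omul ok (sB θ)) S, omul oi S]
        = (fun α => omul (![omul oj S, omul (-omul ok (sB θ)) S, omul oi S] α)
            (oR p - (2 * ε * q) • oconj (sB θ))) := by
  have hpy := Real.sin_sq_add_cos_sq θ
  obtain ⟨hε, hS⟩ | ⟨hε, hS⟩ := hεS <;> subst hε <;> subst hS <;>
    refine ⟨?_, ?_, ?_⟩ <;> funext α <;> fin_cases α <;>
    (simp only [mvec, Fin.sum_univ_three, Bmat, Matrix.cons_val_zero, Matrix.cons_val_one,
        Matrix.head_cons, Matrix.cons_val_two, Matrix.tail_cons, Matrix.cons_val',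
        Matrix.cons_val_fin_one, Matrix.empty_val', Matrix.head_fin_const, Fin.isValue, Fin.zero_eta, Fin.mk_one, Fin.reduceFinMk];
     simp only [o1, oR, sB, oconj, omul,
        Prod.smul_mk, Prod.mk_add_mk, Prod.neg_mk, Prod.mk_sub_mk, Prod.fst_zero,
        Prod.snd_zero, Prod.fst_add, Prod.snd_add, Prod.fst_neg, Prod.snd_neg,
        Prod.smul_fst, Prod.smul_snd, Prod.fst_sub, Prod.snd_sub];
     rw [Prod.ext_iff];
     constructor <;>
     · ext <;>
       simp only [Quaternion.re_mul, Quaternion.imI_mul, Quaternion.imJ_mul,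
         Quaternion.imK_mul, Quaternion.re_add, Quaternion.imI_add, Quaternion.imJ_add,
         Quaternion.imK_add, Quaternion.re_sub, Quaternion.imI_sub, Quaternion.imJ_sub,
         Quaternion.imK_sub, Quaternion.re_neg, Quaternion.imI_neg, Quaternion.imJ_neg,
         Quaternion.imK_neg, Quaternion.re_smul, Quaternion.imI_smul, Quaternion.imJ_smul,
         Quaternion.imK_smul, Quaternion.re_star, Quaternion.imI_star, Quaternion.imJ_star,
         Quaternion.imK_star, Quaternion.re_coe, Quaternion.imI_coe, Quaternion.imJ_coe,
         Quaternion.imK_coe, Quaternion.re_zero, Quaternion.imI_zero, Quaternion.imJ_zero,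
         Quaternion.imK_zero, Quaternion.re_one, Quaternion.imI_one, Quaternion.imJ_one,
         Quaternion.imK_one, smul_eq_mul] <;>
       simp only [oi, oj, ok, ol, oil, ojl, okl, Quaternion.re_zero, Quaternion.imI_zero,
         Quaternion.imJ_zero, Quaternion.imK_zero] <;>
       first
         | ring1
         | linear_combination q * hpy
         | linear_combination (-q : ℝ) * hpy
         | linear_combination (2*q : ℝ) * hpy
         | linear_combination (-2*q : ℝ) * hpy
         | linear_combination (3*q : ℝ) * hpy
         | linear_combination (-3*q : ℝ) * hpy
         | linear_combination (q/2 : ℝ) * hpy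
         | linear_combination (-q/2 : ℝ) * hpy
         | nlinarith [hpy, sq_nonneg (Real.sin θ), sq_nonneg (Real.cos θ)])
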